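/- Let n ≥ 0, r ≥ 2 and 0 ≤ s ≤ r−1 be integers with n + r ≥ 3, and for 1 ≤ j ≤ r−1 let η_j ≤ ζ_j be rational numbers with η_j < ζ_j whenever 1 ≤ j ≤ s. For τ in the box T = ∏_{j=1}^{r−1}[η_j, ζ_j] with i₀(τ) = 0 set m₀(τ) = b₀(τ) − (n + r − 1) and m₁(τ) = b₀(τ) + s₀(τ) − 1. Then the union of the closed real intervals [m₀(τ), m₁(τ)] over all τ ∈ T with i₀(τ) = 0 equals the closed interval [c_min, c_max], where c_min = i₁ − Σ_{j=1}^{r−1}⌊ζ_j⌋ − (n + r − 1), c_max = s₁ − 1 − Σ_{j=1}^{r−1}⌊η_j⌋, i₁ = |{j ≤ s : ζ_j ∈ ℤ}| and s₁ = |{j > s : η_j ∈ ℤ}|. -/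

import Mathlib

lemma exists_sum_eq : ∀ {m : ℕ} (a b : Fin m → ℤ), (∀ j, a j ≤ b j) →
    ∀ S : ℤ, ∑ j, a j ≤ S → S ≤ ∑ j, b j →
    ∃ c : Fin m → ℤ, (∀ j, a j ≤ c j ∧ c j ≤ b j) ∧ ∑ j, c j = S := by
  intro m
  induction m with
  | zero =>
    intro a b _ S h1 h2
    refine ⟨a, fun j => j.elim0, ?_⟩
    simp at h1 h2 ⊢; omega
  | succ m ih =>
    intro a b hab S h1 h2
    rw [Fin.sum_univ_succ] at h1 h2
    set c0 : ℤ := max (a 0) (min (b 0) (S - ∑ j, a (Fin.succ j))) with hc0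
    have hc0a : a 0 ≤ c0 := le_max_left _ _
    have hc0b : c0 ≤ b 0 := max_le (hab 0) (min_le_left _ _)
    have hmono : ∑ j, a (Fin.succ j) ≤ ∑ j, b (Fin.succ j) :=
      Finset.sum_le_sum fun j _ => hab j.succ
    have hA : c0 ≤ S - ∑ j, a (Fin.succ j) := max_le (by omega) (min_le_right _ _)
    have hB : S - ∑ j, b (Fin.succ j) ≤ c0 := by
      have := le_max_right (a 0) (min (b 0) (S - ∑ j, a (Fin.succ j)))
      rcases min_cases (b 0) (S - ∑ j, a (Fin.succ j)) with ⟨h, _⟩ | ⟨h, _⟩ <;> omega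
    obtain ⟨c, hc, hsum⟩ := ih (fun j => a j.succ) (fun j => b j.succ)
      (fun j => hab j.succ) (S - c0) (by beta_reduce; omega) (by beta_reduce; omega)
    refine ⟨Fin.cons c0 c, ?_, ?_⟩
    · intro j
      refine Fin.cases ?_ ?_ j
      · simpa using ⟨hc0a, hc0b⟩
      · intro i; simpa using hc i
    · rw [Fin.sum_univ_succ]; simp only [Fin.cons_zero, Fin.cons_succ]; omega

lemma realize_mid (u v : ℝ) (c : ℤ) (h1 : u < c + 1) (h2 : (c:ℝ) < v) (h3 : u < v) :
    ∃ t : ℝ, u ≤ t ∧ t ≤ v ∧ (∀ k : ℤ, t ≠ k) ∧ ⌊t⌋ = c := by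
  set t : ℝ := (max u (c:ℝ) + min v ((c:ℝ)+1))/2 with ht
  have hmm : max u (c:ℝ) < min v ((c:ℝ)+1) :=
    max_lt (lt_min h3 h1) (lt_min h2 (by linarith))
  have ht1 : max u (c:ℝ) < t := by rw [ht]; linarith
  have ht2 : t < min v ((c:ℝ)+1) := by rw [ht]; linarith
  have hcl : (c:ℝ) < t := lt_of_le_of_lt (le_max_right _ _) ht1
  have hcu : t < c + 1 := lt_of_lt_of_le ht2 (min_le_right _ _)
  refine ⟨t, (le_max_left _ _).trans ht1.le, ht2.le.trans (min_le_left _ _), ?_, ?_⟩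
  · intro k hk
    rw [hk] at hcl hcu
    have h5 : c < k := by exact_mod_cast hcl
    have h7 : k < c + 1 := by exact_mod_cast hcu
    omega
  · rw [Int.floor_eq_iff]
    exact ⟨hcl.le, hcu⟩

lemma realize_max (u v : ℝ) (c : ℤ) (h1 : u < c + 1) (h2 : (c:ℝ) ≤ v) (h3 : u ≤ v) :
    ∃ t : ℝ, u ≤ t ∧ t ≤ v ∧ ⌊t⌋ = c := by
  refine ⟨max u (c:ℝ), le_max_left _ _, max_le h3 h2, ?_⟩
  rw [Int.floor_eq_iff]
  exact ⟨le_max_right _ _, max_lt h1 (by linarith)⟩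

lemma card_eq_sum_ite (m : ℕ) (P : Fin m → Prop) [DecidablePred P] :
    (Nat.card {j // P j} : ℤ) = ∑ j, if P j then (1:ℤ) else 0 := by
  rw [Nat.card_eq_fintype_card, Fintype.card_subtype, Finset.sum_boole]



/-- The key step of Case 2 (`n + r ≥ 3`) of the proof of Theorem 2.2: the union
of the intervals `[m₀(τ), m₁(τ)]`, where `m₀(τ) = b₀(τ) - (n + r - 1)` and
`m₁(τ) = b₀(τ) + s₀(τ) - 1`, over all `τ` in the box `∏ [η_j, ζ_j]` with
`i₀(τ) = 0` (i.e. `τ_j ∉ ℤ` for `1 ≤ j ≤ s`), equals the closed interval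
`[c_min, c_max]` with `c_min = i₁ - ∑ ⌊ζ_j⌋ - (n + r - 1)` and
`c_max = s₁ - 1 - ∑ ⌊η_j⌋`, where `i₁ = |{j ≤ s : ζ_j ∈ ℤ}|` and
`s₁ = |{j > s : η_j ∈ ℤ}|`. -/
theorem stmt2 (n r s : ℕ) (hr : 2 ≤ r) (hnr : 3 ≤ n + r) (hs : s ≤ r - 1)
    (η ζ : Fin (r - 1) → ℚ)
    (hle : ∀ j, η j ≤ ζ j)
    (hlt : ∀ j : Fin (r - 1), (j : ℕ) < s → η j < ζ j) :
    {x : ℝ | ∃ τ : Fin (r - 1) → ℝ,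
        (∀ j, (η j : ℝ) ≤ τ j ∧ τ j ≤ (ζ j : ℝ)) ∧
        (∀ j : Fin (r - 1), (j : ℕ) < s → ∀ k : ℤ, τ j ≠ (k : ℝ)) ∧
        x ∈ Set.Icc
          (((-(∑ j, ⌊τ j⌋) - (n + r - 1) : ℤ) : ℝ))
          (((-(∑ j, ⌊τ j⌋)
              + (Nat.card {j : Fin (r - 1) // s ≤ (j : ℕ) ∧ ∃ k : ℤ, τ j = (k : ℝ)} : ℤ)
              - 1 : ℤ) : ℝ))}
    = Set.Icc
        ((((Nat.card {j : Fin (r - 1) // (j : ℕ) < s ∧ ∃ k : ℤ, ζ j = (k : ℚ)} : ℤ)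
            - ∑ j, ⌊ζ j⌋ - (n + r - 1) : ℤ) : ℝ))
        ((((Nat.card {j : Fin (r - 1) // s ≤ (j : ℕ) ∧ ∃ k : ℤ, η j = (k : ℚ)} : ℤ)
            - 1 - ∑ j, ⌊η j⌋ : ℤ) : ℝ)) := by
  classical
  have hnr2 : (2:ℤ) ≤ (n:ℤ) + r - 1 := by
    have : (3:ℤ) ≤ (n:ℤ) + r := by exact_mod_cast hnr
    omega
  have hi1 : (Nat.card {j : Fin (r-1) // (j:ℕ) < s ∧ ∃ k:ℤ, ζ j = (k:ℚ)} : ℤ)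
      = ∑ j : Fin (r-1), if (j:ℕ) < s ∧ ∃ k:ℤ, ζ j = (k:ℚ) then (1:ℤ) else 0 :=
    card_eq_sum_ite _ _
  have hs1 : (Nat.card {j : Fin (r-1) // s ≤ (j:ℕ) ∧ ∃ k:ℤ, η j = (k:ℚ)} : ℤ)
      = ∑ j : Fin (r-1), if s ≤ (j:ℕ) ∧ ∃ k:ℤ, η j = (k:ℚ) then (1:ℤ) else 0 :=
    card_eq_sum_ite _ _
  ext x
  simp only [Set.mem_setOf_eq, Set.mem_Icc]
  constructor
  · rintro ⟨τ, hbox, hnint, hτl, hτu⟩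
    have hs0 : (Nat.card {j : Fin (r-1) // s ≤ (j:ℕ) ∧ ∃ k:ℤ, τ j = (k:ℝ)} : ℤ)
        = ∑ j : Fin (r-1), if s ≤ (j:ℕ) ∧ ∃ k:ℤ, τ j = (k:ℝ) then (1:ℤ) else 0 :=
      card_eq_sum_ite _ _
    -- key1 : ∑ ⌊τ⌋ + i₁ ≤ ∑ ⌊ζ⌋
    have key1 : ∑ j, ⌊τ j⌋ + ∑ j : Fin (r-1), (if (j:ℕ) < s ∧ ∃ k:ℤ, ζ j = (k:ℚ) then (1:ℤ) else 0)
        ≤ ∑ j, ⌊ζ j⌋ := by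
      rw [← Finset.sum_add_distrib]
      refine Finset.sum_le_sum fun j _ => ?_
      by_cases hj : (j:ℕ) < s ∧ ∃ k:ℤ, ζ j = (k:ℚ)
      · obtain ⟨hjs, k, hk⟩ := hj
        have hτk : τ j < (k:ℝ) := by
          have h1 : τ j ≤ (ζ j : ℝ) := (hbox j).2
          rw [hk] at h1
          push_cast at h1
          exact lt_of_le_of_ne h1 (hnint j hjs k)
        have h2 : ⌊τ j⌋ < k := Int.floor_lt.mpr hτk
        have h3 : ⌊ζ j⌋ = k := by rw [hk]; exact Int.floor_intCast k
        rw [if_pos (⟨hjs, k, hk⟩ : (j:ℕ) < s ∧ ∃ k':ℤ, ζ j = (k':ℚ))]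
        omega
      · rw [if_neg hj, add_zero]
        have : ⌊τ j⌋ ≤ ⌊(ζ j : ℝ)⌋ := Int.floor_le_floor (hbox j).2
        rwa [Rat.floor_cast] at this
    -- key2 : ∑ ⌊η⌋ + s₀(τ) ≤ ∑ ⌊τ⌋ + s₁
    have key2 : ∑ j, ⌊η j⌋ + ∑ j : Fin (r-1), (if s ≤ (j:ℕ) ∧ ∃ k:ℤ, τ j = (k:ℝ) then (1:ℤ) else 0)
        ≤ ∑ j, ⌊τ j⌋ + ∑ j : Fin (r-1), (if s ≤ (j:ℕ) ∧ ∃ k:ℤ, η j = (k:ℚ) then (1:ℤ) else 0) := by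
      rw [← Finset.sum_add_distrib, ← Finset.sum_add_distrib]
      refine Finset.sum_le_sum fun j _ => ?_
      have hbase : ⌊η j⌋ ≤ ⌊τ j⌋ := by
        have : ⌊(η j : ℝ)⌋ ≤ ⌊τ j⌋ := Int.floor_le_floor (hbox j).1
        rwa [Rat.floor_cast] at this
      by_cases h1 : s ≤ (j:ℕ) ∧ ∃ k:ℤ, τ j = (k:ℝ)
      · by_cases h2 : s ≤ (j:ℕ) ∧ ∃ k:ℤ, η j = (k:ℚ)
        · rw [if_pos h1, if_pos h2]; omega
        · rw [if_pos h1, if_neg h2]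
          obtain ⟨hjs, k, hk⟩ := h1
          have hηk : (η j : ℝ) < (k:ℝ) := by
            have h3 : (η j : ℝ) ≤ τ j := (hbox j).1
            rw [hk] at h3
            refine lt_of_le_of_ne h3 fun heq => h2 ⟨hjs, k, ?_⟩
            exact_mod_cast heq
          have h4 : (η j : ℚ) < (k:ℚ) := by exact_mod_cast hηk
          have h5 : ⌊η j⌋ < k := Int.floor_lt.mpr h4
          have h6 : ⌊τ j⌋ = k := by rw [hk]; exact Int.floor_intCast k
          omega
      · rw [if_neg h1]
        split <;> omega
    constructor
    · refine le_trans (Int.cast_le.mpr ?_) hτl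
      omega
    · refine le_trans hτu (Int.cast_le.mpr ?_)
      omega
  · rintro ⟨hxl, hxu⟩
    by_cases hcase : ((-(∑ j, ⌊η j⌋) - ((n:ℤ) + r - 1) : ℤ) : ℝ) ≤ x
    · -- Case A : use τ near η
      have hA : ∀ j : Fin (r-1), ∃ t : ℝ, (η j:ℝ) ≤ t ∧ t ≤ (ζ j:ℝ) ∧
          ((j:ℕ) < s → ∀ k:ℤ, t ≠ (k:ℝ)) ∧ ⌊t⌋ = ⌊η j⌋ ∧ (¬(j:ℕ) < s → t = (η j:ℝ)) := by
        intro j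
        by_cases hj : (j:ℕ) < s
        · have hfu : (η j : ℝ) < (⌊η j⌋ : ℝ) + 1 := by
            have h0 : η j < (⌊η j⌋ : ℚ) + 1 := Int.lt_floor_add_one _
            exact_mod_cast h0
          have hfl : ((⌊η j⌋ : ℝ)) < (ζ j : ℝ) := by
            have h0 : (⌊η j⌋ : ℚ) < ζ j := lt_of_le_of_lt (Int.floor_le _) (hlt j hj)
            exact_mod_cast h0
          obtain ⟨t, ht1, ht2, ht3, ht4⟩ := realize_mid (η j : ℝ) (ζ j : ℝ) ⌊η j⌋
            hfu hfl (by exact_mod_cast hlt j hj)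
          exact ⟨t, ht1, ht2, fun _ => ht3, ht4, fun h => absurd hj h⟩
        · exact ⟨(η j : ℝ), le_refl _, by exact_mod_cast hle j, fun h => absurd h hj,
            Rat.floor_cast _, fun _ => rfl⟩
      choose τ hτ1 hτ2 hτ3 hτ4 hτ5 using hA
      have hsum : ∑ j, ⌊τ j⌋ = ∑ j, ⌊η j⌋ := Finset.sum_congr rfl fun j _ => hτ4 j
      have hcard : Nat.card {j : Fin (r-1) // s ≤ (j:ℕ) ∧ ∃ k:ℤ, τ j = (k:ℝ)}
          = Nat.card {j : Fin (r-1) // s ≤ (j:ℕ) ∧ ∃ k:ℤ, η j = (k:ℚ)} := by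
        refine Nat.card_congr (Equiv.subtypeEquivRight fun j => ?_)
        constructor
        · rintro ⟨hjs, k, hk⟩
          rw [hτ5 j (not_lt.mpr hjs)] at hk
          exact ⟨hjs, k, by exact_mod_cast hk⟩
        · rintro ⟨hjs, k, hk⟩
          refine ⟨hjs, k, ?_⟩
          rw [hτ5 j (not_lt.mpr hjs), hk]
          push_cast; ring
      refine ⟨τ, fun j => ⟨hτ1 j, hτ2 j⟩, hτ3, ?_, ?_⟩
      · rw [hsum]; exact hcase
      · rw [hsum, hcard]
        refine le_trans hxu (Int.cast_le.mpr (by omega))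
    · -- Case B : x < -∑⌊η⌋ - (n+r-1)
      push_neg at hcase
      set N : ℤ := ⌈-x⌉ - ((n:ℤ) + r - 1) with hN
      have hab : ∀ j : Fin (r-1),
          ⌊η j⌋ ≤ ⌊ζ j⌋ - (if (j:ℕ) < s ∧ ∃ k:ℤ, ζ j = (k:ℚ) then (1:ℤ) else 0) := by
        intro j
        by_cases hj : (j:ℕ) < s ∧ ∃ k:ℤ, ζ j = (k:ℚ)
        · obtain ⟨hjs, k, hk⟩ := hj
          have h1 : η j < (k:ℚ) := by rw [← hk]; exact hlt j hjs
          have h2 : ⌊η j⌋ < k := Int.floor_lt.mpr h1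
          have h3 : ⌊ζ j⌋ = k := by rw [hk]; exact Int.floor_intCast k
          rw [if_pos ⟨hjs, k, hk⟩]; omega
        · rw [if_neg hj]
          simpa using Int.floor_le_floor (hle j)
      have hSa : ∑ j : Fin (r-1), ⌊η j⌋ + ((n:ℤ) + r - 1) < ⌈-x⌉ := by
        rw [Int.lt_ceil]
        push_cast at hcase ⊢
        linarith
      have hSb : ⌈-x⌉ ≤ ∑ j : Fin (r-1), ⌊ζ j⌋
          - (Nat.card {j : Fin (r-1) // (j:ℕ) < s ∧ ∃ k:ℤ, ζ j = (k:ℚ)} : ℤ)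
          + ((n:ℤ) + r - 1) := by
        rw [Int.ceil_le]
        push_cast at hxl ⊢
        linarith
      have hsum_b : ∑ j : Fin (r-1), (⌊ζ j⌋ - (if (j:ℕ) < s ∧ ∃ k:ℤ, ζ j = (k:ℚ) then (1:ℤ) else 0))
          = ∑ j : Fin (r-1), ⌊ζ j⌋
            - ∑ j : Fin (r-1), (if (j:ℕ) < s ∧ ∃ k:ℤ, ζ j = (k:ℚ) then (1:ℤ) else 0) :=
        Finset.sum_sub_distrib _ _
      obtain ⟨c, hc, hcsum⟩ := exists_sum_eq (fun j => ⌊η j⌋)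
        (fun j => ⌊ζ j⌋ - (if (j:ℕ) < s ∧ ∃ k:ℤ, ζ j = (k:ℚ) then (1:ℤ) else 0))
        hab N (by beta_reduce; omega) (by beta_reduce; rw [hsum_b]; omega)
      have hB : ∀ j : Fin (r-1), ∃ t : ℝ, (η j:ℝ) ≤ t ∧ t ≤ (ζ j:ℝ) ∧
          ((j:ℕ) < s → ∀ k:ℤ, t ≠ (k:ℝ)) ∧ ⌊t⌋ = c j := by
        intro j
        have hc1 : ⌊η j⌋ ≤ c j := (hc j).1
        have hη1 : (η j : ℝ) < c j + 1 := by
          have h0 : η j < (⌊η j⌋ : ℚ) + 1 := Int.lt_floor_add_one _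
          have h1 : (η j : ℝ) < (⌊η j⌋:ℝ) + 1 := by exact_mod_cast h0
          have h2 : ((⌊η j⌋:ℝ)) ≤ (c j : ℝ) := by exact_mod_cast hc1
          linarith
        by_cases hj : (j:ℕ) < s
        · have hc2 : (c j : ℝ) < (ζ j : ℝ) := by
            by_cases hz : ∃ k:ℤ, ζ j = (k:ℚ)
            · obtain ⟨k, hk⟩ := hz
              have h3 : ⌊ζ j⌋ = k := by rw [hk]; exact Int.floor_intCast k
              have h4 : c j ≤ k - 1 := by
                have h4a : c j ≤ ⌊ζ j⌋ - (if (j:ℕ) < s ∧ ∃ k':ℤ, ζ j = (k':ℚ) then (1:ℤ) else 0) :=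
                  (hc j).2
                rw [if_pos (⟨hj, k, hk⟩ : (j:ℕ) < s ∧ ∃ k':ℤ, ζ j = (k':ℚ))] at h4a
                have h3 : ⌊ζ j⌋ = k := by rw [hk]; exact Int.floor_intCast k
                omega
              rw [hk]
              push_cast
              have : (c j : ℝ) ≤ (k:ℝ) - 1 := by exact_mod_cast h4
              linarith
            · have h4 : c j ≤ ⌊ζ j⌋ := by
                have h4a : c j ≤ ⌊ζ j⌋ - (if (j:ℕ) < s ∧ ∃ k':ℤ, ζ j = (k':ℚ) then (1:ℤ) else 0) :=
                  (hc j).2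
                have hneg : ¬((j:ℕ) < s ∧ ∃ k':ℤ, ζ j = (k':ℚ)) := fun h => hz h.2
                rw [if_neg hneg] at h4a
                omega
              have h5 : (⌊ζ j⌋ : ℚ) < ζ j :=
                lt_of_le_of_ne (Int.floor_le _) fun heq => hz ⟨⌊ζ j⌋, heq.symm⟩
              have h6 : ((c j : ℚ) : ℝ) ≤ ((⌊ζ j⌋ : ℚ) : ℝ) := by exact_mod_cast h4
              have h7 : ((⌊ζ j⌋ : ℚ) : ℝ) < (ζ j : ℝ) := by exact_mod_cast h5
              refine lt_of_le_of_lt ?_ h7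
              exact_mod_cast h6
          obtain ⟨t, ht1, ht2, ht3, ht4⟩ := realize_mid (η j : ℝ) (ζ j : ℝ) (c j)
            hη1 hc2 (by exact_mod_cast hlt j hj)
          exact ⟨t, ht1, ht2, fun _ => ht3, ht4⟩
        · have hc2 : (c j : ℝ) ≤ (ζ j : ℝ) := by
            have h4 : c j ≤ ⌊ζ j⌋ := by
              have h4a : c j ≤ ⌊ζ j⌋ - (if (j:ℕ) < s ∧ ∃ k':ℤ, ζ j = (k':ℚ) then (1:ℤ) else 0) :=
                (hc j).2
              have hneg : ¬((j:ℕ) < s ∧ ∃ k':ℤ, ζ j = (k':ℚ)) := fun h => hj h.1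
              rw [if_neg hneg] at h4a
              omega
            have h5 : ((⌊ζ j⌋ : ℚ) : ℝ) ≤ (ζ j : ℝ) := by exact_mod_cast Int.floor_le (ζ j)
            refine le_trans ?_ h5
            exact_mod_cast (by exact_mod_cast h4 : ((c j : ℚ)) ≤ ((⌊ζ j⌋ : ℚ)))
          obtain ⟨t, ht1, ht2, ht4⟩ := realize_max (η j : ℝ) (ζ j : ℝ) (c j)
            hη1 hc2 (by exact_mod_cast hle j)
          exact ⟨t, ht1, ht2, fun h => absurd h hj, ht4⟩
      choose τ hτ1 hτ2 hτ3 hτ4 using hB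
      have hsum : ∑ j, ⌊τ j⌋ = N := by
        rw [Finset.sum_congr rfl fun j _ => hτ4 j, hcsum]
      refine ⟨τ, fun j => ⟨hτ1 j, hτ2 j⟩, hτ3, ?_, ?_⟩
      · rw [hsum]
        have heq : -N - ((n:ℤ) + r - 1) = -⌈-x⌉ := by rw [hN]; ring
        rw [heq]
        have h8 : (-x) ≤ (⌈-x⌉ : ℝ) := Int.le_ceil _
        push_cast
        linarith
      · rw [hsum]
        have h10 : (0:ℤ) ≤ (Nat.card {j : Fin (r-1) // s ≤ (j:ℕ) ∧ ∃ k:ℤ, τ j = (k:ℝ)} : ℤ) :=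
          Int.ofNat_nonneg _
        have h12 : -⌈-x⌉ + ((n:ℤ) + r - 1) - 1
            ≤ -N + (Nat.card {j : Fin (r-1) // s ≤ (j:ℕ) ∧ ∃ k:ℤ, τ j = (k:ℝ)} : ℤ) - 1 := by
          omega
        refine le_trans ?_ (Int.cast_le.mpr h12)
        have h9 : (⌈-x⌉ : ℝ) < -x + 1 := Int.ceil_lt_add_one _
        have h11 : (2:ℝ) ≤ (n:ℝ) + r - 1 := by exact_mod_cast hnr2
        push_cast
        linarith
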